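/- arXiv:1211.4129 — 2 statements merged into one kernel-verified Lean document; each statement's English description precedes it below -/
import Mathlib

section
/- Let $a, c > 0$, $b \geq 0$, $\lambda \in \mathbb{R}$, and set $\Delta = (b-\lambda)^2 - 4ac$. Suppose $\Delta = 0$ and define $x_k = \eta\, k\, (\sqrt{ac}/a)^k$ for $k \geq 1$ with $\eta > 0$. If $\lambda = b + 2\sqrt{ac}$, then $\boldsymbol x$ satisfies $b x_1 + a x_2 = \lambda x_1$ and $a x_{k+1} + (b-\lambda) x_k + c x_{k-1} = 0$ for all $k \geq 2$; moreover $\sum_{k\geq 1} x_k < \infty$ if and only if $a > c$. -/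
/-- Case `Δ = 0` for the tridiagonal matrix: with `λ = b + 2√(ac)` and
`x_k = η k (√(ac)/a)^k`, the vector `x` satisfies the left-eigenvector equations
`b x₁ + a x₂ = λ x₁` and `a x_{k+1} + (b-λ) x_k + c x_{k-1} = 0` for `k ≥ 2`, and
`∑_{k≥1} x_k < ∞` iff `a > c`. -/
theorem tridiagonal_eigenvector_delta_zero
    (a b c lam η : ℝ) (ha : 0 < a) (hc : 0 < c) (hb : 0 ≤ b) (hη : 0 < η)
    (hΔ : (b - lam) ^ 2 - 4 * a * c = 0)
    (hlam : lam = b + 2 * Real.sqrt (a * c))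
    (x : ℕ → ℝ) (hx : ∀ k : ℕ, x k = η * k * (Real.sqrt (a * c) / a) ^ k) :
    b * x 1 + a * x 2 = lam * x 1 ∧
    (∀ k : ℕ, 2 ≤ k → a * x (k + 1) + (b - lam) * x k + c * x (k - 1) = 0) ∧
    (Summable x ↔ c < a) := by
  set s := Real.sqrt (a * c) with hs
  have hac : 0 < a * c := mul_pos ha hc
  have hs2 : s ^ 2 = a * c := Real.sq_sqrt hac.le
  have hspos : 0 < s := Real.sqrt_pos.mpr hac
  have ha' : a ≠ 0 := ha.ne'
  refine ⟨?_, ?_, ?_⟩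
  · rw [hx 1, hx 2, hlam]
    push_cast
    field_simp
  · intro k hk
    obtain ⟨m, rfl⟩ : ∃ m, k = m + 2 := ⟨k - 2, by omega⟩
    rw [hx (m + 2 + 1), hx (m + 2), hx (m + 2 - 1), hlam]
    push_cast [Nat.add_sub_cancel]
    have : (s / a) ^ (m + 3) = (s/a)^(m+1) * (s/a)^2 := by ring
    rw [show m + 2 + 1 = m + 3 from rfl, this,
      show (s/a) ^ (m + 2) = (s/a)^(m+1) * (s/a) from by ring]
    have h2 : (s / a) ^ 2 = c / a := by
      rw [div_pow, hs2]; field_simp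
    rw [h2]
    field_simp
    linear_combination (-2*η*((m:ℝ)+2)*(s/a)^(m+1)) * hs2
  · have hxeq : x = fun k : ℕ => η * ((k : ℝ) * (s / a) ^ k) := by
      funext k; rw [hx k]; ring
    rw [hxeq, summable_mul_left_iff hη.ne']
    constructor
    · intro hsum
      by_contra hca
      push_neg at hca
      have hr : 1 ≤ s / a := by
        rw [le_div_iff₀ ha, one_mul]
        nlinarith [hs2, Real.sqrt_nonneg (a*c)]
      have ht := hsum.tendsto_atTop_zero
      have hge : ∀ k : ℕ, 1 ≤ k → (1 : ℝ) ≤ (k : ℝ) * (s / a) ^ k := by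
        intro k hk
        have h1 : (1:ℝ) ≤ (s/a)^k := one_le_pow₀ hr
        have h2 : (1:ℝ) ≤ (k:ℝ) := by exact_mod_cast hk
        nlinarith
      have := ht.eventually (gt_mem_nhds (show (0:ℝ) < 1 by norm_num))
      rw [Filter.eventually_atTop] at this
      obtain ⟨N, hN⟩ := this
      have := hN (max N 1) (le_max_left _ _)
      have := hge (max N 1) (le_max_right _ _)
      linarith
    · intro hca
      have hr : s / a < 1 := by
        rw [div_lt_one ha]
        have : s < Real.sqrt (a * a) := by
          apply Real.sqrt_lt_sqrt hac.le
          nlinarith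
        rwa [Real.sqrt_mul_self ha.le] at this
      have hr0 : 0 ≤ s / a := div_nonneg hspos.le ha.le
      have := summable_pow_mul_geometric_of_norm_lt_one (R := ℝ) 1
        (r := s / a) (by rwa [Real.norm_eq_abs, abs_of_nonneg hr0])
      simpa using this
end

section
/- Let $M$ be the infinite tridiagonal matrix with sub-diagonal $a$, diagonal $b$, super-diagonal $c$ ($a, c > 0$, $b \geq 0$), and first row $(b, c, 0, \ldots)$. For every $\lambda \geq b + 2\sqrt{ac}$ there exists a strictly positive vector $\boldsymbol x$ with $\boldsymbol x M = \lambda \boldsymbol x$; and no strictly positive left-eigenvector exists for $\lambda < b + 2\sqrt{ac}$ with $\lambda > b - 2\sqrt{ac}$. Hence the convergence norm of $M$ equals $b + 2\sqrt{ac}$ (as the minimal $\lambda$ admitting a nonnegative $\boldsymbol x$ with $\boldsymbol x M \leq \lambda \boldsymbol x$, within the range $\lambda > b - 2\sqrt{ac}$). -/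
set_option maxHeartbeats 1000000


noncomputable def Sgeo (p q : ℝ) (j : ℕ) : ℝ := ∑ k ∈ Finset.range (j+1), p^k * q^(j-k)

lemma Sgeo_succ_left (p q : ℝ) (j : ℕ) :
    Sgeo p q (j+1) = p * Sgeo p q j + q^(j+1) := by
  unfold Sgeo
  rw [Finset.sum_range_succ' (fun k => p^k * q^(j+1-k)) (j+1)]
  simp only [pow_zero, one_mul, Nat.succ_sub_succ]
  rw [Finset.mul_sum]
  congr 1
  apply Finset.sum_congr rfl
  intro k hk
  ring

lemma Sgeo_succ_right (p q : ℝ) (j : ℕ) :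
    Sgeo p q (j+1) = q * Sgeo p q j + p^(j+1) := by
  unfold Sgeo
  rw [Finset.sum_range_succ]
  simp only [Nat.sub_self, pow_zero, mul_one]
  rw [Finset.mul_sum]
  congr 1
  apply Finset.sum_congr rfl
  intro k hk
  rw [Finset.mem_range] at hk
  have h : j + 1 - k = (j - k) + 1 := by omega
  rw [h]
  ring

lemma Sgeo_pos (p q : ℝ) (hp : 0 < p) (hq : 0 < q) (j : ℕ) : 0 < Sgeo p q j := by
  apply Finset.sum_pos
  · intro k _
    positivity
  · exact Finset.nonempty_range_add_one

lemma tridiag_exists (a b c lam : ℝ) (ha : 0 < a) (hc : 0 < c)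
    (hlam : b + 2 * Real.sqrt (a*c) ≤ lam) :
    ∃ x : ℕ → ℝ, (∀ k, 0 < x k) ∧ (x 0 * b + x 1 * a = lam * x 0) ∧
      ∀ j, x j * c + x (j+1) * b + x (j+2) * a = lam * x (j+1) := by
  have hac : 0 < a * c := mul_pos ha hc
  have hspos : 0 < Real.sqrt (a*c) := Real.sqrt_pos.mpr hac
  have hs2 : Real.sqrt (a*c)^2 = a*c := Real.sq_sqrt hac.le
  set mu := lam - b with hmudef
  have hmu : 2 * Real.sqrt (a*c) ≤ mu := by rw [hmudef]; linarith
  have hmupos : 0 < mu := by linarith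
  have hd : 0 ≤ mu^2 - 4*(a*c) := by nlinarith
  set t := Real.sqrt (mu^2 - 4*(a*c)) with htdef
  have ht2 : t^2 = mu^2 - 4*(a*c) := Real.sq_sqrt hd
  have htnn : 0 ≤ t := Real.sqrt_nonneg _
  have htlt : t < mu := by nlinarith
  set p := (mu + t) / (2*a) with hpdef
  set q := (mu - t) / (2*a) with hqdef
  have hp : 0 < p := by apply div_pos; linarith; linarith
  have hq : 0 < q := by apply div_pos; linarith; linarith
  have hca : a * (p * q) = c := by
    rw [hpdef, hqdef]
    field_simp
    nlinarith [ht2]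
  have hmua : a * (p + q) = mu := by
    rw [hpdef, hqdef]
    field_simp
    ring
  refine ⟨Sgeo p q, Sgeo_pos p q hp hq, ?_, ?_⟩
  · have e0 : Sgeo p q 0 = 1 := by simp [Sgeo]
    have e1 : Sgeo p q 1 = q + p := by
      simp [Sgeo, Finset.sum_range_succ]
    rw [e0, e1]
    nlinarith [hmua]
  · intro j
    have g3 := Sgeo_succ_right p q j
    have g1 := Sgeo_succ_left p q (j+1)
    have g2 := Sgeo_succ_right p q (j+1)
    have key : c * Sgeo p q j + a * Sgeo p q (j+2) = mu * Sgeo p q (j+1) := by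
      linear_combination (-(Sgeo p q j)) * hca + (Sgeo p q (j+1)) * hmua
        - a*p*g3 + a*g2
    rw [hmudef] at key
    linarith [key]


lemma tsum_col_zero (a b c : ℝ) (M : ℕ → ℕ → ℝ)
    (hM : ∀ i j, M i j =
      if j + 1 = i then a else if j = i then b else if j = i + 1 then c else 0)
    (x : ℕ → ℝ) : (∑' i, x i * M i 0) = x 0 * b + x 1 * a := by
  rw [tsum_eq_sum (s := ({0, 1} : Finset ℕ)) ?_]
  · rw [Finset.sum_insert (by simp), Finset.sum_singleton, hM, hM]
    norm_num
  · intro i hi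
    simp only [Finset.mem_insert, Finset.mem_singleton] at hi
    push_neg at hi
    rw [hM, if_neg (by omega), if_neg (by omega), if_neg (by omega), mul_zero]

lemma tsum_col_succ (a b c : ℝ) (M : ℕ → ℕ → ℝ)
    (hM : ∀ i j, M i j =
      if j + 1 = i then a else if j = i then b else if j = i + 1 then c else 0)
    (x : ℕ → ℝ) (j : ℕ) :
    (∑' i, x i * M i (j+1)) = x j * c + x (j+1) * b + x (j+2) * a := by
  rw [tsum_eq_sum (s := ({j, j+1, j+2} : Finset ℕ)) ?_]
  · rw [Finset.sum_insert (by simp), Finset.sum_insert (by simp), Finset.sum_singleton,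
      hM, hM, hM]
    rw [if_neg (by omega), if_neg (by omega), if_pos (by omega),
      if_neg (by omega), if_pos (by omega), if_pos (by omega)]
    ring
  · intro i hi
    simp only [Finset.mem_insert, Finset.mem_singleton] at hi
    push_neg at hi
    rw [hM, if_neg (by omega), if_neg (by omega), if_neg (by omega), mul_zero]


lemma tridiag_oscillation (a c mu : ℝ) (ha : 0 < a) (hc : 0 < c)
    (hmu2 : mu < 2 * Real.sqrt (a*c)) (x : ℕ → ℝ) (hx : ∀ k, 0 < x k)
    (h0 : a * x 1 ≤ mu * x 0)
    (hrec : ∀ j, c * x j + a * x (j+2) ≤ mu * x (j+1)) : False := by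
  have hac : 0 < a * c := mul_pos ha hc
  set s := Real.sqrt (a*c) with hsdef
  have hspos : 0 < s := Real.sqrt_pos.mpr hac
  have hs2 : s^2 = a*c := Real.sq_sqrt hac.le
  have hmupos : 0 < mu := by nlinarith [hx 0, hx 1, mul_pos ha (hx 1)]
  set θ := mu / s with hθdef
  have hθmu : mu = θ * s := by rw [hθdef, div_mul_cancel₀ mu hspos.ne']
  have hθ0 : 0 < θ := div_pos hmupos hspos
  have hθ2 : θ < 2 := by rw [hθdef, div_lt_iff₀ hspos]; linarith
  set φ := Real.arccos (θ/2) with hφdef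
  have hcos : Real.cos φ = θ/2 := Real.cos_arccos (by linarith) (by linarith)
  have hφpos : 0 < φ := Real.arccos_pos.mpr (by linarith)
  have hφlt : φ < Real.pi := by
    rcases lt_or_eq_of_le (Real.arccos_le_pi (θ/2)) with h | h
    · exact h
    · exfalso; have := Real.arccos_eq_pi.mp h; linarith
  have hsinφ : 0 < Real.sin φ := Real.sin_pos_of_pos_of_lt_pi hφpos hφlt
  set ρ := s / a with hρdef
  have hρpos : 0 < ρ := div_pos hspos ha
  have haρ : a * ρ = s := by rw [hρdef, mul_comm, div_mul_cancel₀ s ha.ne']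
  have haρ2 : a * ρ^2 = c := by
    have h : a * ρ^2 = (a*ρ)*ρ := by ring
    rw [h, haρ, hρdef]
    field_simp
    nlinarith [hs2]
  set w : ℕ → ℝ := fun j => ρ^j * Real.sin (((j:ℝ)+1) * φ) with hwdef
  have hwrec : ∀ j : ℕ, c * w j + a * w (j+2) = mu * w (j+1) := by
    intro j
    have hsin : Real.sin (((j:ℝ)+1)*φ) + Real.sin (((j:ℝ)+3)*φ)
        = 2 * Real.cos φ * Real.sin (((j:ℝ)+2)*φ) := by
      have h1 : ((j:ℝ)+1)*φ = ((j:ℝ)+2)*φ - φ := by ring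
      have h2 : ((j:ℝ)+3)*φ = ((j:ℝ)+2)*φ + φ := by ring
      rw [h1, h2, Real.sin_add, Real.sin_sub]; ring
    rw [hcos] at hsin
    simp only [hwdef]
    push_cast
    have e1 : (↑j + 2 + 1 : ℝ) = (↑j + 3 : ℝ) := by ring
    have e2 : (↑j + 1 + 1 : ℝ) = (↑j + 2 : ℝ) := by ring
    rw [e1, e2]
    have e3 : ρ^(j+2) = ρ^j * ρ^2 := by ring
    have e4 : ρ^(j+1) = ρ^j * ρ := by ring
    rw [e3, e4]
    calc c * (ρ^j * Real.sin ((↑j+1)*φ)) + a * (ρ^j * ρ^2 * Real.sin ((↑j+3)*φ))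
        = c * (ρ ^ j * Real.sin ((↑j+1)*φ)) + (a*ρ^2) * (ρ^j * Real.sin ((↑j+3)*φ)) := by ring
      _ = c * ρ^j * (Real.sin ((↑j+1)*φ) + Real.sin ((↑j+3)*φ)) := by rw [haρ2]; ring
      _ = c * ρ^j * (2 * (θ/2) * Real.sin ((↑j+2)*φ)) := by rw [hsin]
      _ = θ * (a * ρ^2) * (ρ^j * Real.sin ((↑j+2)*φ)) := by rw [haρ2]; ring
      _ = mu * (ρ^j * ρ * Real.sin ((↑j+2)*φ)) := by
          rw [hθmu]
          have h : a * ρ^2 = s * ρ := by rw [← haρ]; ring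
          rw [h]; ring
  set D : ℕ → ℝ := fun j => x (j+1) * w j - x j * w (j+1) with hDdef
  have eD : ∀ j, D j = x (j+1) * w j - x j * w (j+1) := fun j => rfl
  have eD' : ∀ j, D (j+1) = x (j+2) * w (j+1) - x (j+1) * w (j+2) := fun j => rfl
  clear_value w D
  have hw0 : w 0 = Real.sin φ := by simp [hwdef]
  have hw1 : w 1 = ρ * (θ * Real.sin φ) := by
    have h : ((1:ℕ):ℝ) + 1 = 2 := by norm_num
    simp only [hwdef, h, pow_one]
    rw [two_mul, Real.sin_add, hcos]
    ring
  have hD0 : D 0 ≤ 0 := by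
    have e0 : D 0 = x 1 * w 0 - x 0 * w 1 := eD 0
    have h1 : a * (x 1 * w 0 - x 0 * w 1) = Real.sin φ * (a * x 1 - mu * x 0) := by
      rw [hw0, hw1, hθmu]
      linear_combination (-(θ * x 0 * Real.sin φ)) * haρ
    rw [e0]
    nlinarith [h1, h0, hsinφ, ha]
  have hstep : ∀ j : ℕ, 0 ≤ w (j+1) → D j ≤ 0 → D (j+1) ≤ 0 := by
    intro j hwj hDj
    have h1 : (c * x j + a * x (j+2)) * w (j+1) ≤ (mu * x (j+1)) * w (j+1) :=
      mul_le_mul_of_nonneg_right (hrec j) hwj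
    have h2 : (c * w j + a * w (j+2)) * x (j+1) = (mu * w (j+1)) * x (j+1) := by
      rw [hwrec j]
    have e1 := eD' j
    have e0 := eD j
    have h3 : a * (x (j+2) * w (j+1) - x (j+1) * w (j+2)) ≤
        c * (x (j+1) * w j - x j * w (j+1)) := by nlinarith [h1, h2]
    rw [e1]
    rw [e0] at hDj
    have h4 := mul_le_mul_of_nonneg_left hDj hc.le
    have h5 : a * (x (j+2) * w (j+1) - x (j+1) * w (j+2)) ≤ a * 0 := by linarith
    exact le_of_mul_le_mul_left h5 ha
  obtain ⟨m, hnm⟩ : ∃ m : ℕ, ⌈Real.pi / φ⌉₊ = m + 2 := by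
    have h1 : 1 < ⌈Real.pi / φ⌉₊ := by
      apply Nat.lt_ceil.mpr
      rw [Nat.cast_one, lt_div_iff₀ hφpos]
      linarith
    exact ⟨⌈Real.pi / φ⌉₊ - 2, by omega⟩
  have hnge : Real.pi ≤ ((m:ℝ) + 2) * φ := by
    have h := Nat.le_ceil (Real.pi / φ)
    rw [hnm, div_le_iff₀ hφpos] at h
    push_cast at h
    linarith
  have hnlt : ((m:ℝ) + 2) * φ < Real.pi + φ := by
    have h : (m + 1 : ℕ) < ⌈Real.pi / φ⌉₊ := by omega
    have h2 := Nat.lt_ceil.mp h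
    rw [lt_div_iff₀ hφpos] at h2
    push_cast at h2
    linarith
  have hsinpos : ∀ k : ℕ, 1 ≤ k → k ≤ m + 1 → 0 < Real.sin ((k:ℝ) * φ) := by
    intro k hk1 hk2
    apply Real.sin_pos_of_pos_of_lt_pi
    · have h : (1:ℝ) ≤ (k:ℝ) := by exact_mod_cast hk1
      nlinarith
    · have hk : (k:ℝ) ≤ (m:ℝ) + 1 := by exact_mod_cast hk2
      have := mul_le_mul_of_nonneg_right hk hφpos.le
      linarith
  have hsinn : Real.sin (((m:ℝ) + 2) * φ) ≤ 0 := by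
    rw [← Real.sin_sub_two_pi]
    apply Real.sin_nonpos_of_nonpos_of_neg_pi_le
    · linarith
    · linarith
  have hwpos : ∀ j : ℕ, j ≤ m → 0 < w j := by
    intro j hj
    simp only [hwdef]
    apply mul_pos (pow_pos hρpos j)
    have e : ((j:ℝ) + 1) = (((j+1:ℕ)):ℝ) := by push_cast; ring
    rw [e]
    exact hsinpos (j+1) (by omega) (by omega)
  have hwm1 : w (m+1) ≤ 0 := by
    simp only [hwdef]
    have e : (((m+1:ℕ)):ℝ) + 1 = ((m:ℝ) + 2) := by push_cast; ring
    rw [e]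
    nlinarith [pow_pos hρpos (m+1), hsinn]
  have hDm : ∀ j : ℕ, j ≤ m → D j ≤ 0 := by
    intro j
    induction j with
    | zero => intro _; exact hD0
    | succ k ih =>
      intro hk
      exact hstep k (hwpos (k+1) hk).le (ih (by omega))
  have hfinal := hDm m le_rfl
  have e : D m = x (m+1) * w m - x m * w (m+1) := eD m
  rw [e] at hfinal
  have A := mul_pos (hx (m+1)) (hwpos m le_rfl)
  nlinarith [hx m, hwm1, hfinal, A]


lemma tridiag_all_pos (a b c lam : ℝ) (ha : 0 < a) (hc : 0 < c)
    (x : ℕ → ℝ) (hx : ∀ i, 0 ≤ x i) (hne : x ≠ 0)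
    (h0 : x 0 * b + x 1 * a ≤ lam * x 0)
    (hrec : ∀ j, x j * c + x (j+1) * b + x (j+2) * a ≤ lam * x (j+1)) :
    ∀ k, 0 < x k := by
  by_contra h
  push_neg at h
  obtain ⟨k, hk⟩ := h
  have hk0 : x k = 0 := le_antisymm hk (hx k)
  have step : ∀ j, x (j+1) = 0 → x j = 0 ∧ x (j+2) = 0 := by
    intro j hj
    have h := hrec j
    rw [hj] at h
    constructor <;> nlinarith [hx j, hx (j+2), mul_nonneg (hx j) hc.le,
      mul_nonneg (hx (j+2)) ha.le]
  have down : ∀ j, x j = 0 → x 0 = 0 := by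
    intro j
    induction j with
    | zero => exact id
    | succ n ih => intro hn; exact ih (step n hn).1
  have h00 : x 0 = 0 := down k hk0
  have h1 : x 1 = 0 := by
    rw [h00] at h0
    nlinarith [hx 1]
  have hall : ∀ j, x j = 0 ∧ x (j+1) = 0 := by
    intro j
    induction j with
    | zero => exact ⟨h00, h1⟩
    | succ n ih => exact ⟨ih.2, (step n ih.2).2⟩
  exact hne (funext fun j => (hall j).1)


/-- For the infinite tridiagonal matrix `M` with sub-diagonal `a`, diagonal `b`,
super-diagonal `c` and first row `(b, c, 0, …)`: every `λ ≥ b + 2√(ac)` admits a strictly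
positive left eigenvector; no strictly positive left eigenvector exists for
`b - 2√(ac) < λ < b + 2√(ac)`; and `b + 2√(ac)` is the convergence norm, i.e. the smallest
`λ` (in the range `λ > b - 2√(ac)`) admitting a nonnegative nonzero `x` with `x M ≤ λ x`. -/
theorem tridiagonal_convergence_norm
    (a b c : ℝ) (ha : 0 < a) (hc : 0 < c) (hb : 0 ≤ b)
    (M : ℕ → ℕ → ℝ)
    (hM : ∀ i j, M i j =
      if j + 1 = i then a else if j = i then b else if j = i + 1 then c else 0) :
    (∀ lam : ℝ, b + 2 * Real.sqrt (a * c) ≤ lam →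
      ∃ x : ℕ → ℝ, (∀ k, 0 < x k) ∧ ∀ j, (∑' i, x i * M i j) = lam * x j) ∧
    (∀ lam : ℝ, b - 2 * Real.sqrt (a * c) < lam → lam < b + 2 * Real.sqrt (a * c) →
      ¬ ∃ x : ℕ → ℝ, (∀ k, 0 < x k) ∧ ∀ j, (∑' i, x i * M i j) = lam * x j) ∧
    IsLeast {lam : ℝ | b - 2 * Real.sqrt (a * c) < lam ∧
        ∃ x : ℕ → ℝ, (∀ i, 0 ≤ x i) ∧ x ≠ 0 ∧ ∀ j, (∑' i, x i * M i j) ≤ lam * x j}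
      (b + 2 * Real.sqrt (a * c)) := by
  have hspos : 0 < Real.sqrt (a*c) := Real.sqrt_pos.mpr (mul_pos ha hc)
  refine ⟨?_, ?_, ?_, ?_⟩
  · -- existence for lam ≥ b + 2√(ac)
    intro lam hlam
    obtain ⟨x, hpos, he0, herec⟩ := tridiag_exists a b c lam ha hc hlam
    refine ⟨x, hpos, fun j => ?_⟩
    cases j with
    | zero => rw [tsum_col_zero a b c M hM x]; exact he0
    | succ j => rw [tsum_col_succ a b c M hM x j]; exact herec j
  · -- nonexistence in the open interval
    rintro lam h1 h2 ⟨x, hxpos, heig⟩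
    have he0 := heig 0
    rw [tsum_col_zero a b c M hM x] at he0
    refine tridiag_oscillation a c (lam - b) ha hc (by linarith) x hxpos
      (by linarith) (fun j => ?_)
    have h := heig (j+1)
    rw [tsum_col_succ a b c M hM x j] at h
    linarith
  · -- membership
    refine ⟨by linarith, ?_⟩
    obtain ⟨x, hpos, he0, herec⟩ :=
      tridiag_exists a b c (b + 2 * Real.sqrt (a * c)) ha hc le_rfl
    refine ⟨x, fun i => (hpos i).le, ?_, fun j => ?_⟩
    · intro h
      exact absurd (hpos 0) (by rw [h]; exact lt_irrefl 0)
    · cases j with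
      | zero => rw [tsum_col_zero a b c M hM x]; exact le_of_eq he0
      | succ j => rw [tsum_col_succ a b c M hM x j]; exact le_of_eq (herec j)
  · -- lower bound
    rintro lam ⟨hgt, x, hxnn, hxne, hle⟩
    by_contra hcon
    push_neg at hcon
    have h0' : x 0 * b + x 1 * a ≤ lam * x 0 := by
      have h := hle 0
      rwa [tsum_col_zero a b c M hM x] at h
    have hrec' : ∀ j, x j * c + x (j+1) * b + x (j+2) * a ≤ lam * x (j+1) := by
      intro j
      have h := hle (j+1)
      rwa [tsum_col_succ a b c M hM x j] at h
    have hpos := tridiag_all_pos a b c lam ha hc x hxnn hxne h0' hrec'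
    exact tridiag_oscillation a c (lam - b) ha hc (by linarith) x hpos
      (by linarith) (fun j => by linarith [hrec' j])
end
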